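/- Let J ∈ ℝ^{n×n}, let D ∈ ℝ^{n×n} be a diagonal matrix with nonnegative diagonal entries, and let c ≥ 0. Then every (complex) eigenvalue λ of the matrix J̃ = J − c D satisfies Re λ ≤ λ_max(H(J)), where H(J) = (J + Jᵀ)/2 and λ_max denotes the largest eigenvalue of the symmetric matrix H(J). In particular, if λ_max(H(J)) ≤ 0 (the equilibrium is not reactive), then no eigenvalue of J − cD has positive real part, so reactivity is a prerequisite for Turing (diffusion-driven) instability. -/

import Mathlib

open Matrix

lemma reA {n : ℕ} (M : Matrix (Fin n) (Fin n) ℝ) (v : Fin n → ℂ) :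
    (star v ⬝ᵥ (M.map Complex.ofReal) *ᵥ v).re =
      (fun i => (v i).re) ⬝ᵥ M *ᵥ (fun i => (v i).re)
      + (fun i => (v i).im) ⬝ᵥ M *ᵥ (fun i => (v i).im) := by
  simp only [dotProduct, mulVec, map_apply, Finset.mul_sum, Complex.re_sum]
  rw [← Finset.sum_add_distrib]
  refine Finset.sum_congr rfl fun i _ => ?_
  rw [← Finset.sum_add_distrib]
  refine Finset.sum_congr rfl fun j _ => ?_
  simp [Complex.mul_re, Complex.mul_im, Pi.star_apply, Complex.conj_re, Complex.conj_im]


-- Rayleigh bound for real symmetric matrix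
lemma rayleigh {n : ℕ} (H : Matrix (Fin n) (Fin n) ℝ) (hH : H.IsHermitian)
    (x : Fin n → ℝ) :
    x ⬝ᵥ H *ᵥ x ≤ (⨆ i, hH.eigenvalues i) * (x ⬝ᵥ x) := by
  set U : Matrix (Fin n) (Fin n) ℝ := (hH.eigenvectorUnitary : Matrix (Fin n) (Fin n) ℝ)
  set y : Fin n → ℝ := star U *ᵥ x with hy
  have hspec := hH.spectral_theorem
  have hxy : x ⬝ᵥ x = y ⬝ᵥ y := by
    have hUU : U * star U = 1 := (Matrix.mem_unitaryGroup_iff).mp hH.eigenvectorUnitary.2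
    calc x ⬝ᵥ x = x ⬝ᵥ (U * star U) *ᵥ x := by rw [hUU, one_mulVec]
    _ = x ⬝ᵥ U *ᵥ (star U *ᵥ x) := by rw [← mulVec_mulVec]
    _ = (x ᵥ* U) ⬝ᵥ y := by rw [dotProduct_mulVec]
    _ = y ⬝ᵥ y := by
        congr 1
        ext j
        simp [vecMul, mulVec, dotProduct, y, mul_comm]
  have hquad : x ⬝ᵥ H *ᵥ x = ∑ i, hH.eigenvalues i * (y i)^2 := by
    conv_lhs => rw [hspec, Unitary.conjStarAlgAut_apply]
    rw [← mulVec_mulVec, ← mulVec_mulVec, dotProduct_mulVec]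
    have h1 : x ᵥ* U = y := by
      ext j; simp [vecMul, mulVec, dotProduct, y, mul_comm]
    rw [h1, ← hy]
    simp [diagonal_mulVec_single]
    simp [dotProduct, mulVec, diagonal, mul_comm, sq]
    exact Finset.sum_congr rfl fun i _ => by ring
  rw [hquad, hxy]
  have hbdd : BddAbove (Set.range hH.eigenvalues) := Set.Finite.bddAbove (Set.finite_range _)
  calc ∑ i, hH.eigenvalues i * (y i)^2 ≤ ∑ i, (⨆ i, hH.eigenvalues i) * (y i)^2 := by
        refine Finset.sum_le_sum fun i _ => ?_
        exact mul_le_mul_of_nonneg_right (le_ciSup hbdd i) (sq_nonneg _)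
    _ = (⨆ i, hH.eigenvalues i) * (y ⬝ᵥ y) := by
        rw [← Finset.mul_sum]; congr 1; simp [dotProduct, sq]

lemma diagQuad {n : ℕ} (d : Fin n → ℝ) (hd : ∀ i, 0 ≤ d i) (x : Fin n → ℝ) :
    0 ≤ x ⬝ᵥ (diagonal d) *ᵥ x := by
  simp only [dotProduct, mulVec_diagonal]
  exact Finset.sum_nonneg fun i _ => by nlinarith [hd i, sq_nonneg (x i)]

lemma symQuad {n : ℕ} (J H : Matrix (Fin n) (Fin n) ℝ)
    (hHdef : H = (1 / 2 : ℝ) • (J + Jᵀ)) (x : Fin n → ℝ) :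
    x ⬝ᵥ J *ᵥ x = x ⬝ᵥ H *ᵥ x := by
  have ht : x ⬝ᵥ Jᵀ *ᵥ x = x ⬝ᵥ J *ᵥ x := by
    rw [dotProduct_mulVec, vecMul_transpose, dotProduct_comm]
  rw [hHdef]
  rw [smul_mulVec, dotProduct_smul, add_mulVec, dotProduct_add, ht, smul_eq_mul]
  ring

/-- Reactivity is a prerequisite for Turing instability: if `D` is diagonal with
nonnegative entries and `c ≥ 0`, then every complex eigenvalue `λ` of `J − cD`
satisfies `Re λ ≤ λ_max(H(J))` with `H(J) = (J + Jᵀ)/2`; in particular, if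
`λ_max(H(J)) ≤ 0` then no eigenvalue of `J − cD` has positive real part. -/
theorem reactivity_prerequisite_turing {n : ℕ}
    (J D : Matrix (Fin n) (Fin n) ℝ)
    (dvec : Fin n → ℝ) (hdvec : ∀ i, 0 ≤ dvec i) (hD : D = diagonal dvec)
    (c : ℝ) (hc : 0 ≤ c)
    (H : Matrix (Fin n) (Fin n) ℝ) (hHdef : H = (1 / 2 : ℝ) • (J + Jᵀ))
    (hH : H.IsHermitian) :
    (∀ lam : ℂ,
        (∃ v : Fin n → ℂ, v ≠ 0 ∧
            ((J.map Complex.ofReal - (c : ℂ) • D.map Complex.ofReal)).mulVec v = lam • v) →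
        lam.re ≤ ⨆ i, hH.eigenvalues i) ∧
    ((⨆ i, hH.eigenvalues i) ≤ 0 →
      ∀ lam : ℂ,
        (∃ v : Fin n → ℂ, v ≠ 0 ∧
            ((J.map Complex.ofReal - (c : ℂ) • D.map Complex.ofReal)).mulVec v = lam • v) →
        ¬ 0 < lam.re) := by
  have key : ∀ lam : ℂ,
      (∃ v : Fin n → ℂ, v ≠ 0 ∧
          ((J.map Complex.ofReal - (c : ℂ) • D.map Complex.ofReal)).mulVec v = lam • v) →
      lam.re ≤ ⨆ i, hH.eigenvalues i := by
    rintro lam ⟨v, hv, heig⟩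
    set a : Fin n → ℝ := fun i => (v i).re with ha
    set b : Fin n → ℝ := fun i => (v i).im with hb
    set N : ℝ := a ⬝ᵥ a + b ⬝ᵥ b with hNdef
    have hsv : star v ⬝ᵥ v = (N : ℂ) := by
      simp only [dotProduct, Pi.star_apply]
      push_cast [hNdef, dotProduct, ha, hb]
      rw [← Finset.sum_add_distrib]
      refine Finset.sum_congr rfl fun i _ => ?_
      rw [Complex.star_def, Complex.conj_mul']
      norm_cast
      simp [Complex.sq_norm, Complex.normSq_apply]
    have hNpos : 0 < N := by
      obtain ⟨i, hi⟩ := Function.ne_iff.mp hv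
      have h1 : 0 < Complex.normSq (v i) := Complex.normSq_pos.mpr hi
      have h2 : N = ∑ j, Complex.normSq (v j) := by
        simp [hNdef, dotProduct, ha, hb, Complex.normSq_apply, ← Finset.sum_add_distrib]
      rw [h2]
      exact Finset.sum_pos' (fun j _ => Complex.normSq_nonneg _) ⟨i, Finset.mem_univ i, h1⟩
    have hlhs : (star v ⬝ᵥ ((J.map Complex.ofReal - (c : ℂ) • D.map Complex.ofReal)) *ᵥ v).re
        = lam.re * N := by
      rw [heig]
      rw [dotProduct_smul, hsv]
      simp [Complex.mul_re]
    have hsplit : star v ⬝ᵥ ((J.map Complex.ofReal - (c : ℂ) • D.map Complex.ofReal)) *ᵥ v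
        = star v ⬝ᵥ (J.map Complex.ofReal) *ᵥ v
          - (c : ℂ) * (star v ⬝ᵥ (D.map Complex.ofReal) *ᵥ v) := by
      rw [sub_mulVec, dotProduct_sub, smul_mulVec, dotProduct_smul, smul_eq_mul]
    have hre : lam.re * N
        = (star v ⬝ᵥ (J.map Complex.ofReal) *ᵥ v).re
          - c * (star v ⬝ᵥ (D.map Complex.ofReal) *ᵥ v).re := by
      rw [← hlhs, hsplit, Complex.sub_re, Complex.re_ofReal_mul]
    have hJre : (star v ⬝ᵥ (J.map Complex.ofReal) *ᵥ v).re ≤ (⨆ i, hH.eigenvalues i) * N := by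
      rw [reA]
      rw [symQuad J H hHdef a, symQuad J H hHdef b]
      calc a ⬝ᵥ H *ᵥ a + b ⬝ᵥ H *ᵥ b
          ≤ (⨆ i, hH.eigenvalues i) * (a ⬝ᵥ a) + (⨆ i, hH.eigenvalues i) * (b ⬝ᵥ b) :=
            add_le_add (rayleigh H hH a) (rayleigh H hH b)
        _ = (⨆ i, hH.eigenvalues i) * N := by rw [hNdef]; ring
    have hDre : 0 ≤ (star v ⬝ᵥ (D.map Complex.ofReal) *ᵥ v).re := by
      rw [reA, hD]
      exact add_nonneg (diagQuad dvec hdvec a) (diagQuad dvec hdvec b)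
    have : lam.re * N ≤ (⨆ i, hH.eigenvalues i) * N := by
      rw [hre]
      have := mul_nonneg hc hDre
      linarith
    exact le_of_mul_le_mul_right this hNpos
  exact ⟨key, fun hle lam hex hpos => absurd (lt_of_lt_of_le hpos (key lam hex)) (not_lt.mpr hle)⟩
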